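/- Let n, m, k be positive integers with k < m < n. Let A be an n×n real symmetric positive semidefinite matrix with rank(A) = n − k, let B be an m×n real matrix with rank m, and let W_k be an m×m real symmetric positive semidefinite matrix of rank k such that A_k = A + BᵀW_kB is symmetric positive definite. Let Z be an n×(n−m) real matrix whose columns form a basis of the kernel of B, suppose ZᵀAZ is invertible, and set V = Z(ZᵀAZ)⁻¹Zᵀ. Then A_k⁻¹·A is idempotent, and the matrices V·A and A_k⁻¹·A commute: (A_k⁻¹·A)·(V·A) = (V·A)·(A_k⁻¹·A), with common value V·A. -/
import Mathlib


open Matrix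

/-- Key lemma: if `M + N` is invertible and `rank M + rank N ≤ n`, then
`M * (M + N)⁻¹ * N = 0`. -/
lemma key_cancel {n : ℕ} (M N : Matrix (Fin n) (Fin n) ℝ)
    (hinv : IsUnit (M + N).det) (hr : M.rank + N.rank ≤ n) :
    M * (M + N)⁻¹ * N = 0 := by
  set U := LinearMap.range M.mulVecLin with hU
  set V := LinearMap.range N.mulVecLin with hV
  have hsup : U ⊔ V = ⊤ := by
    rw [eq_top_iff]
    intro x _
    have hx : x = (M + N) *ᵥ ((M + N)⁻¹ *ᵥ x) := by
      rw [mulVec_mulVec, mul_nonsing_inv _ hinv, one_mulVec]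
    rw [hx, add_mulVec]
    exact Submodule.add_mem_sup ⟨_, rfl⟩ ⟨_, rfl⟩
  have hfin : Module.finrank ℝ ↥(U ⊓ V) = 0 := by
    have h1 := Submodule.finrank_sup_add_finrank_inf_eq U V
    rw [hsup, finrank_top] at h1
    have h2 : Module.finrank ℝ (Fin n → ℝ) = n := Module.finrank_fin_fun ℝ
    have h3 : Module.finrank ℝ U = M.rank := rfl
    have h4 : Module.finrank ℝ V = N.rank := rfl
    omega
  have hbot : U ⊓ V = ⊥ := Submodule.finrank_eq_zero.mp hfin
  -- now show the matrix product is zero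
  ext i j
  have key : (M * (M + N)⁻¹ * N) *ᵥ Pi.single j 1 = 0 := by
    set z := (M + N)⁻¹ *ᵥ (N *ᵥ Pi.single j 1) with hz
    have hMz : M *ᵥ z ∈ U := ⟨z, rfl⟩
    have hMN : (M + N) *ᵥ z = N *ᵥ Pi.single j 1 := by
      rw [hz, mulVec_mulVec, mulVec_mulVec, mul_nonsing_inv _ hinv, one_mul]
    have hMz' : M *ᵥ z = N *ᵥ (Pi.single j 1 - z) := by
      have := hMN
      rw [add_mulVec] at this
      rw [mulVec_sub]
      linear_combination (norm := module) this
    have hMzV : M *ᵥ z ∈ V := hMz' ▸ ⟨_, rfl⟩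
    have : M *ᵥ z = 0 := by
      have : M *ᵥ z ∈ U ⊓ V := ⟨hMz, hMzV⟩
      rwa [hbot, Submodule.mem_bot] at this
    calc (M * (M + N)⁻¹ * N) *ᵥ Pi.single j 1
        = M *ᵥ z := by rw [hz, ← mulVec_mulVec, ← mulVec_mulVec]
      _ = 0 := this
  have := congrFun key i
  simpa using this

/-- with `rank A = n - k`, `A_k = A + BᵀW_kB` positive definite and
`V = Z (ZᵀAZ)⁻¹ Zᵀ`, the matrix `A_k⁻¹ A` is idempotent and the projectors `V A` and
`A_k⁻¹ A` commute, with common product `V A`. -/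
theorem projectors_commute {n m k : ℕ}
    (hk : 0 < k) (hkm : k < m) (hmn : m < n)
    (A : Matrix (Fin n) (Fin n) ℝ) (B : Matrix (Fin m) (Fin n) ℝ)
    (Wk : Matrix (Fin m) (Fin m) ℝ)
    (hA : A.PosSemidef) (hrA : A.rank = n - k) (hrB : B.rank = m)
    (hWk : Wk.PosSemidef) (hrWk : Wk.rank = k)
    (hAk : (A + Bᵀ * Wk * B).PosDef)
    (Z : Matrix (Fin n) (Fin (n - m)) ℝ) (hBZ : B * Z = 0) (hrZ : Z.rank = n - m)
    (hZAZ : IsUnit (Zᵀ * A * Z)) :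
    ((A + Bᵀ * Wk * B)⁻¹ * A) * ((A + Bᵀ * Wk * B)⁻¹ * A) = (A + Bᵀ * Wk * B)⁻¹ * A ∧
    ((A + Bᵀ * Wk * B)⁻¹ * A) * ((Z * (Zᵀ * A * Z)⁻¹ * Zᵀ) * A) =
        (Z * (Zᵀ * A * Z)⁻¹ * Zᵀ) * A ∧
    ((Z * (Zᵀ * A * Z)⁻¹ * Zᵀ) * A) * ((A + Bᵀ * Wk * B)⁻¹ * A) =
        (Z * (Zᵀ * A * Z)⁻¹ * Zᵀ) * A := by
  set N := Bᵀ * Wk * B with hN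
  have hdet : IsUnit (A + N).det := isUnit_iff_ne_zero.mpr hAk.det_pos.ne'
  have hrN : N.rank ≤ k := by
    calc N.rank ≤ (Bᵀ * Wk).rank := rank_mul_le_left _ _
      _ ≤ Wk.rank := rank_mul_le_right _ _
      _ = k := hrWk
  have hranks : A.rank + N.rank ≤ n := by omega
  have hkey : A * (A + N)⁻¹ * N = 0 := key_cancel A N hdet hranks
  have hAinvA : A * (A + N)⁻¹ * A = A := by
    have : A * (A + N)⁻¹ * (A + N) = A := by
      rw [mul_assoc, nonsing_inv_mul _ hdet, mul_one]
    calc A * (A + N)⁻¹ * A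
        = A * (A + N)⁻¹ * (A + N) - A * (A + N)⁻¹ * N := by rw [mul_add]; abel
      _ = A - 0 := by rw [this, hkey]
      _ = A := sub_zero A
  have hNV : N * (Z * (Zᵀ * A * Z)⁻¹ * Zᵀ) = 0 := by
    have : N * Z = 0 := by
      show Bᵀ * Wk * B * Z = 0
      rw [Matrix.mul_assoc, hBZ, Matrix.mul_zero]
    calc N * (Z * (Zᵀ * A * Z)⁻¹ * Zᵀ)
        = N * Z * ((Zᵀ * A * Z)⁻¹ * Zᵀ) := by simp only [Matrix.mul_assoc]
      _ = 0 := by rw [this]; exact Matrix.zero_mul _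
  refine ⟨?_, ?_, ?_⟩
  · calc ((A + N)⁻¹ * A) * ((A + N)⁻¹ * A)
        = (A + N)⁻¹ * (A * (A + N)⁻¹ * A) := by simp only [mul_assoc]
      _ = (A + N)⁻¹ * A := by rw [hAinvA]
  · have hAV : A * ((Z * (Zᵀ * A * Z)⁻¹ * Zᵀ) * A) = (A + N) * ((Z * (Zᵀ * A * Z)⁻¹ * Zᵀ) * A) := by
      have : N * ((Z * (Zᵀ * A * Z)⁻¹ * Zᵀ) * A) = 0 := by
        rw [← mul_assoc, hNV, zero_mul]
      rw [add_mul, this, add_zero]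
    calc ((A + N)⁻¹ * A) * ((Z * (Zᵀ * A * Z)⁻¹ * Zᵀ) * A)
        = (A + N)⁻¹ * (A * ((Z * (Zᵀ * A * Z)⁻¹ * Zᵀ) * A)) := by simp only [mul_assoc]
      _ = (A + N)⁻¹ * ((A + N) * ((Z * (Zᵀ * A * Z)⁻¹ * Zᵀ) * A)) := by rw [hAV]
      _ = (Z * (Zᵀ * A * Z)⁻¹ * Zᵀ) * A := by
          rw [← mul_assoc, nonsing_inv_mul _ hdet, one_mul]
  · calc ((Z * (Zᵀ * A * Z)⁻¹ * Zᵀ) * A) * ((A + N)⁻¹ * A)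
        = (Z * (Zᵀ * A * Z)⁻¹ * Zᵀ) * (A * (A + N)⁻¹ * A) := by simp only [mul_assoc]
      _ = (Z * (Zᵀ * A * Z)⁻¹ * Zᵀ) * A := by rw [hAinvA]
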